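/- Let M be a non-singular n×n matrix over a field, and let a be a column index such that the bottom entry M_{n,a} is non-zero. Then there exists a permutation matrix Π that moves column a of M to the rightmost (n-th) position, such that all anti-leading principal minors of M·Π are non-zero (i.e., for each k ∈ {1,…,n}, the determinant of the bottom-right k×k submatrix of M·Π is non-zero). -/

import Mathlib

private lemma key_step {F : Type*} [Field F] {n k : ℕ}
    (B : Matrix (Fin (k+1)) (Fin n) F)
    (hB : LinearIndependent F (fun i => B i))
    (g : Fin k → Fin n)
    (hg : (B.submatrix Fin.succ g).det ≠ 0) :
    ∃ c, (B.submatrix id (Fin.cases c g)).det ≠ 0 := by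
  by_contra h
  push_neg at h
  have expand : ∀ c, (B.submatrix id (Fin.cases c g)).det
      = ∑ i : Fin (k+1), (-1) ^ (i : ℕ) * B i c * (B.submatrix i.succAbove g).det := by
    intro c
    rw [Matrix.det_succ_column_zero]
    refine Finset.sum_congr rfl fun i _ => ?_
    rw [Matrix.submatrix_submatrix]
    simp [Function.comp_def]
  set d : Fin (k+1) → F := fun i => (-1) ^ (i : ℕ) * (B.submatrix i.succAbove g).det with hd
  have hsum : ∑ i : Fin (k+1), d i • B i = 0 := by
    funext c
    have h0 := h c
    rw [expand c] at h0
    simpa [Finset.sum_apply, mul_comm, mul_assoc, mul_left_comm] using h0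
  have hall := Fintype.linearIndependent_iff.mp hB d hsum 0
  rw [hd] at hall
  simp only [Fin.val_zero, pow_zero, one_mul, Fin.succAbove_zero] at hall
  exact hg hall

private lemma build_perm {F : Type*} [Field F] {n : ℕ} (hn : 0 < n)
    (M : Matrix (Fin n) (Fin n) F) (hM : M.det ≠ 0)
    (a : Fin n) (ha : M ⟨n - 1, Nat.sub_lt hn Nat.one_pos⟩ a ≠ 0) :
    ∀ (k : ℕ) (_hk1 : 1 ≤ k) (_hkn : k ≤ n),
      ∃ g : Fin k → Fin n,
        (∀ hk0 : 0 < k, g ⟨k - 1, by omega⟩ = a) ∧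
        ∀ m : ℕ, (hm : m ≤ k) →
          (M.submatrix
            (fun i : Fin m => (⟨n - m + i.1, by have := i.2; omega⟩ : Fin n))
            (fun j : Fin m => g ⟨k - m + j.1, by have := j.2; omega⟩)).det ≠ 0 := by
  intro k
  induction k with
  | zero => omega
  | succ k ih =>
    intro _ hk1n
    rcases Nat.eq_or_lt_of_le (Nat.one_le_iff_ne_zero.mpr (by omega) : 1 ≤ k + 1) with h1 | h1
    · -- base case k + 1 = 1
      have hk0 : k = 0 := by omega
      subst hk0
      refine ⟨fun _ => a, fun _ => rfl, ?_⟩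
      intro m hm
      interval_cases m
      · simp [Matrix.det_fin_zero]
      · rw [Matrix.det_fin_one, Matrix.submatrix_apply]
        convert ha using 2
        exact Fin.ext (by simp)
    · -- inductive step, k ≥ 1
      have hk1 : 1 ≤ k := by omega
      obtain ⟨g, hglast, hgminor⟩ := ih hk1 (by omega)
      set B : Matrix (Fin (k+1)) (Fin n) F :=
        M.submatrix (fun i : Fin (k+1) => (⟨n - (k+1) + i.1, by have := i.2; omega⟩ : Fin n)) id
        with hBdef
      have hBrows : LinearIndependent F (fun i => B i) := by
        have hrows : LinearIndependent F (fun i => M i) :=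
          Matrix.linearIndependent_rows_iff_isUnit.mpr
            (Matrix.isUnit_iff_isUnit_det M |>.mpr (isUnit_iff_ne_zero.mpr hM))
        exact hrows.comp
          (fun i : Fin (k+1) => (⟨n - (k+1) + i.1, by have := i.2; omega⟩ : Fin n))
          (fun i j hij => by
            have h2 := congrArg Fin.val hij
            simp only [Fin.val_mk] at h2
            exact Fin.ext (by omega))
      have hgdet : (B.submatrix Fin.succ g).det ≠ 0 := by
        have h2 := hgminor k le_rfl
        convert h2 using 2
        ext i j
        simp only [Matrix.submatrix_apply, hBdef]
        congr 1
        · exact Fin.ext (by simp only [Fin.val_mk, Fin.val_succ]; omega)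
        · have h5 : (⟨k - k + j.1, by have := j.2; omega⟩ : Fin k) = j :=
            Fin.ext (by simp only [Fin.val_mk]; omega)
          rw [h5]
          rfl
      obtain ⟨c, hc⟩ := key_step B hBrows g hgdet
      refine ⟨Fin.cases c g, ?_, ?_⟩
      · intro _
        have h3 : (⟨k + 1 - 1, by omega⟩ : Fin (k+1)) = Fin.succ ⟨k - 1, by omega⟩ :=
          Fin.ext (by simp only [Fin.val_mk, Fin.val_succ]; omega)
        rw [h3]
        simp only [Fin.cases_succ]
        exact hglast hk1
      · intro m hm
        rcases Nat.eq_or_lt_of_le hm with hmk | hmk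
        · -- m = k + 1 : use hc
          subst hmk
          convert hc using 2
          ext i j
          simp only [Matrix.submatrix_apply, hBdef, id_eq]
          have h5 : (⟨k + 1 - (k + 1) + j.1, by have := j.2; omega⟩ : Fin (k+1)) = j :=
            Fin.ext (by simp only [Fin.val_mk]; omega)
          rw [h5]
        · -- m ≤ k : use hgminor
          have hmk' : m ≤ k := by omega
          have h2 := hgminor m hmk'
          convert h2 using 2
          ext i j
          simp only [Matrix.submatrix_apply]
          congr 1
          have h4 : (⟨k + 1 - m + j.1, by have := j.2; omega⟩ : Fin (k+1)) =
              Fin.succ ⟨k - m + j.1, by have := j.2; omega⟩ :=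
            Fin.ext (by simp only [Fin.val_mk, Fin.val_succ]; omega)
          rw [h4]
          simp only [Fin.cases_succ]

/-- Strong version of the permutation lemma: if `M` is non-singular and the bottom entry
of column `a` is non-zero, there is a column permutation `σ` sending the last position to
`a` such that all anti-leading principal minors of the column-permuted matrix are
non-zero. -/
theorem stmt_5 {F : Type*} [Field F] (n : ℕ) (hn : 0 < n)
    (M : Matrix (Fin n) (Fin n) F) (hM : M.det ≠ 0)
    (a : Fin n) (ha : M ⟨n - 1, by omega⟩ a ≠ 0) :
    ∃ σ : Equiv.Perm (Fin n),
      σ ⟨n - 1, by omega⟩ = a ∧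
      ∀ k : ℕ, (hk : k ≤ n) →
        ((M.submatrix id σ).submatrix
            (fun i : Fin k => (⟨n - k + i.1, by have := i.2; omega⟩ : Fin n))
            (fun j : Fin k => (⟨n - k + j.1, by have := j.2; omega⟩ : Fin n))).det ≠ 0 := by
  obtain ⟨g, hglast, hgminor⟩ := build_perm hn M hM a ha n hn le_rfl
  have hginj : Function.Injective g := by
    intro i j hij
    by_contra hne
    have h2 := hgminor n le_rfl
    apply h2
    apply Matrix.det_zero_of_column_eq (i := i) (j := j) hne
    intro x
    simp only [Matrix.submatrix_apply]
    congr 1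
    rw [show (⟨n - n + i.1, by have := i.2; omega⟩ : Fin n) = i from
        Fin.ext (by simp only [Fin.val_mk]; omega),
      show (⟨n - n + j.1, by have := j.2; omega⟩ : Fin n) = j from
        Fin.ext (by simp only [Fin.val_mk]; omega)]
    exact hij
  have hgbij : Function.Bijective g := ⟨hginj, Finite.surjective_of_injective hginj⟩
  refine ⟨Equiv.ofBijective g hgbij, ?_, ?_⟩
  · exact hglast hn
  · intro k hk
    have h2 := hgminor k hk
    exact h2
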